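/- For partition λ = (λ_1,…,λ_n), the polynomial (B_n^+)^{λ_n}(B_{n-1}^+)^{λ_{n-1}-λ_n}⋯(B_1^+)^{λ_1-λ_2}·1 is a symmetric and homogeneous polynomial of degree |λ| = λ_1 + ⋯ + λ_n in x_1,…,x_n. -/

import Mathlib

open MvPolynomial

noncomputable section Jack

/-- The field `ℚ(α)` of rational functions in the Jack parameter `α`. -/
abbrev FF : Type := RatFunc ℚ

/-- The Jack parameter `α`, a transcendental element of `ℚ(α)`. -/
abbrev alpha : FF := RatFunc.X

/-- Polynomials in `x_1, …, x_n` over `ℚ(α)`. -/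
abbrev R (n : ℕ) : Type := MvPolynomial (Fin n) FF

variable {n : ℕ}

/-- The exchange operator `K_{ij}` permuting the variables `x_i` and `x_j`. -/
def Kex (i j : Fin n) (p : R n) : R n := rename (Equiv.swap i j) p

lemma kex_dvd (i j : Fin n) (p : R n) : (X i - X j : R n) ∣ (p - Kex i j p) := by
  unfold Kex
  induction p using MvPolynomial.induction_on with
  | C a => simp
  | add p q hp hq =>
      have h := dvd_add hp hq
      rw [map_add]
      convert h using 1
      ring
  | mul_X p k hp =>
      rw [map_mul, rename_X]
      have key : p * X k - rename (Equiv.swap i j) p * X (Equiv.swap i j k)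
          = (p - rename (Equiv.swap i j) p) * X k
            + rename (Equiv.swap i j) p * (X k - X (Equiv.swap i j k)) := by ring
      rw [key]
      refine dvd_add (hp.mul_right _) ?_
      rcases eq_or_ne k i with rfl | hki
      · rw [Equiv.swap_apply_left]
        exact Dvd.intro_left _ rfl
      rcases eq_or_ne k j with rfl | hkj
      · rw [Equiv.swap_apply_right]
        refine dvd_mul_of_dvd_right ?_ _
        exact dvd_sub_comm.mp dvd_rfl
      · rw [Equiv.swap_apply_of_ne_of_ne hki hkj]
        simp

/-- The divided difference `(p - K_{ij} p)/(x_i - x_j)`, a polynomial. -/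
def dd (i j : Fin n) (p : R n) : R n := (kex_dvd i j p).choose

lemma dd_spec (i j : Fin n) (p : R n) :
    p - Kex i j p = (X i - X j) * dd i j p := (kex_dvd i j p).choose_spec

/-- The Dunkl--Cherednik operator
`D_i = α x_i ∂/∂x_i + Σ_{j ≠ i} (x_i/(x_i - x_j))(1 - K_{ij})`. -/
def D (i : Fin n) (p : R n) : R n :=
  C alpha * (X i * pderiv i p) + ∑ j ∈ Finset.univ.erase i, X i * dd i j p

/-- The shifted operator `D_i + m`. -/
def Dm (i : Fin n) (m : ℤ) (p : R n) : R n := D i p + m • p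

/-- `(D_{j_1}+m)(D_{j_2}+m+1)⋯` along a list of indices, applied to `p`. -/
def DJl : List (Fin n) → ℤ → R n → R n
  | [], _, p => p
  | j :: t, m, p => Dm j m (DJl t (m + 1) p)

/-- `D_J = (D_{j_1}+1)(D_{j_2}+2)⋯(D_{j_ℓ}+ℓ)` for `J = {j_1 < … < j_ℓ}`. -/
def DJ (J : Finset (Fin n)) (p : R n) : R n := DJl (J.sort (· ≤ ·)) 1 p

/-- The creation operator `B_i^+ = Σ_{|J| = i} x_J D_J`. -/
def Bop (i : ℕ) (p : R n) : R n :=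
  ∑ J ∈ Finset.univ.powersetCard i, (∏ k ∈ J, X k) * DJ J p

/-- The canonical image of `ℤ[α]` in `ℚ(α)`. -/
def toFF (q : Polynomial ℤ) : FF :=
  algebraMap (Polynomial ℚ) FF (q.map (Int.castRingHom ℚ))

/-- A scalar in `ℚ(α)` is a polynomial in `α` with integer coefficients. -/
def IntAlpha (c : FF) : Prop := ∃ q : Polynomial ℤ, c = toFF q

/-- `p` is symmetric in the variables indexed by `J`. -/
def SymmIn (J : Finset (Fin n)) (p : R n) : Prop :=
  ∀ i ∈ J, ∀ j ∈ J, Kex i j p = p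

/-- The monomial symmetric polynomial `m_μ`, the sum of `x^ν` over the distinct
permutations `ν` of the exponent vector `μ`. -/
def msymmF (μ : Fin n → ℕ) : R n :=
  ∑ ν ∈ Finset.image
      (fun σ : Equiv.Perm (Fin n) => Finsupp.equivFunOnFinite.symm (μ ∘ σ))
      Finset.univ,
    monomial ν 1

/-- The power-sum product `p_λ = p_{λ_1} p_{λ_2} ⋯` over the nonzero parts of `λ`. -/
def pprod (lam : Fin n → ℕ) : R n :=
  ∏ i ∈ Finset.univ.filter (fun i => lam i ≠ 0), psum (Fin n) FF (lam i)

/-- The number of (nonzero) parts `ℓ(λ)`. -/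
def plen (lam : Fin n → ℕ) : ℕ := (Finset.univ.filter fun i => lam i ≠ 0).card

/-- `z_λ = ∏_i i^{m_i(λ)} m_i(λ)!`. -/
def zed (lam : Fin n → ℕ) : ℕ :=
  ∏ i ∈ Finset.Icc 1 (∑ j, lam j),
    i ^ ((Finset.univ.filter fun j => lam j = i).card)
      * Nat.factorial ((Finset.univ.filter fun j => lam j = i).card)

/-- Dominance order: `μ ≤ λ` (same total degree). -/
def Dominates (μ lam : Fin n → ℕ) : Prop :=
  (∑ i, μ i = ∑ i, lam i) ∧
    ∀ k : Fin n, ∑ i ∈ Finset.univ.filter (· ≤ k), μ i ≤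
      ∑ i ∈ Finset.univ.filter (· ≤ k), lam i

/-- Iterated Rodrigues construction: `rodA lam i = (B_i^+)^{λ_i-λ_{i+1}} ⋯ (B_1^+)^{λ_1-λ_2}·1`,
where `lam k` denotes `λ_k` (1-indexed). -/
def rodA (lam : ℕ → ℕ) : ℕ → R n
  | 0 => 1
  | i + 1 => (Bop (i + 1))^[lam (i + 1) - lam (i + 2)] (rodA lam i)

/-- `(B_n^+)^{λ_n}(B_{n-1}^+)^{λ_{n-1}-λ_n} ⋯ (B_1^+)^{λ_1-λ_2}·1`. -/
def rod (lam : ℕ → ℕ) : R n := rodA lam n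

/-- The field of rational functions in `x_1,…,x_n` over `ℚ(α)`. -/
abbrev KF (n : ℕ) : Type := FractionRing (R n)

/-- The embedding of polynomials into rational functions. -/
def toK : R n →+* KF n := algebraMap (R n) (KF n)

/-- The Sutherland operator
`H(α) = α Σ_j (x_j ∂_j)^2 + Σ_{j<k} ((x_j+x_k)/(x_j-x_k))(x_j ∂_j − x_k ∂_k)`,
applied to a polynomial, with values in the field of rational functions. -/
def Hop (p : R n) : KF n :=
  toK (C alpha * ∑ j, X j * pderiv j (X j * pderiv j p))
    + ∑ jk ∈ (Finset.univ : Finset (Fin n × Fin n)).filter (fun jk => jk.1 < jk.2),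
        (toK (X jk.1 + X jk.2) / toK (X jk.1 - X jk.2))
          * toK (X jk.1 * pderiv jk.1 p - X jk.2 * pderiv jk.2 p)

section Aux

variable {n : ℕ}

lemma Kex_Kex (i j : Fin n) (p : R n) : Kex i j (Kex i j p) = p := by
  unfold Kex
  rw [rename_rename]
  have : (⇑(Equiv.swap i j) ∘ ⇑(Equiv.swap i j)) = id := by
    funext x; simp
  rw [this, rename_id, AlgHom.id_apply]

lemma Kex_comm (i j : Fin n) (p : R n) : Kex j i p = Kex i j p := by
  unfold Kex; rw [Equiv.swap_comm]

lemma X_sub_X_ne {i j : Fin n} (hij : i ≠ j) : (X i - X j : R n) ≠ 0 := by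
  intro h
  have h2 := congrArg (coeff (Finsupp.single i 1)) h
  simp [MvPolynomial.coeff_X', Finsupp.single_eq_single_iff, hij, Ne.symm hij] at h2

lemma dd_unique {i j : Fin n} (hij : i ≠ j) {p q : R n}
    (h : (X i - X j) * q = p - Kex i j p) : q = dd i j p :=
  mul_left_cancel₀ (X_sub_X_ne hij) (by rw [h, dd_spec])

lemma dd_zero {i j : Fin n} (hij : i ≠ j) : dd i j (0 : R n) = 0 := by
  refine (dd_unique hij ?_).symm
  simp [Kex]

lemma dd_add {i j : Fin n} (hij : i ≠ j) (p q : R n) :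
    dd i j (p + q) = dd i j p + dd i j q := by
  refine (dd_unique hij ?_).symm
  rw [mul_add, ← dd_spec, ← dd_spec]
  unfold Kex
  rw [map_add]
  ring

lemma dd_Cmul {i j : Fin n} (hij : i ≠ j) (c : FF) (p : R n) :
    dd i j (C c * p) = C c * dd i j p := by
  refine (dd_unique hij ?_).symm
  unfold Kex
  rw [map_mul, rename_C]
  have h := dd_spec i j p
  unfold Kex at h
  calc (X i - X j) * (C c * dd i j p) = C c * ((X i - X j) * dd i j p) := by ring
  _ = C c * (p - rename (⇑(Equiv.swap i j)) p) := by rw [h]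
  _ = C c * p - C c * rename (⇑(Equiv.swap i j)) p := by ring

lemma dd_invariant {i j : Fin n} (hij : i ≠ j) {p : R n} (hp : Kex i j p = p) :
    dd i j p = 0 := by
  refine (dd_unique hij ?_).symm
  rw [hp]; ring

lemma dd_flip {i j : Fin n} (hij : i ≠ j) (p : R n) : dd j i p = -dd i j p := by
  refine (dd_unique hij.symm ?_).symm
  rw [Kex_comm]
  have h := dd_spec i j p
  calc (X j - X i) * -dd i j p = (X i - X j) * dd i j p := by ring
  _ = p - Kex i j p := h.symm

lemma dd_mul {i j : Fin n} (hij : i ≠ j) (f g : R n) :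
    dd i j (f * g) = f * dd i j g + dd i j f * Kex i j g := by
  refine (dd_unique hij ?_).symm
  have hf := dd_spec i j f
  have hg := dd_spec i j g
  have : Kex i j (f * g) = Kex i j f * Kex i j g := by unfold Kex; rw [map_mul]
  rw [this]
  calc (X i - X j) * (f * dd i j g + dd i j f * Kex i j g)
      = f * ((X i - X j) * dd i j g) + ((X i - X j) * dd i j f) * Kex i j g := by ring
  _ = f * (g - Kex i j g) + (f - Kex i j f) * Kex i j g := by rw [hf, hg]
  _ = f * g - Kex i j f * Kex i j g := by ring

lemma dd_mul_inv {i j : Fin n} (hij : i ≠ j) {f : R n} (hf : Kex i j f = f) (g : R n) :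
    dd i j (f * g) = f * dd i j g := by
  rw [dd_mul hij, dd_invariant hij hf, zero_mul, add_zero]

lemma Kex_rename (σ : Equiv.Perm (Fin n)) (i j : Fin n) (p : R n) :
    rename (⇑σ) (Kex i j p) = Kex (σ i) (σ j) (rename (⇑σ) p) := by
  unfold Kex
  rw [rename_rename, rename_rename]
  have hfun : ⇑σ ∘ ⇑(Equiv.swap i j) = ⇑(Equiv.swap (σ i) (σ j)) ∘ ⇑σ := by
    funext x; simp [Function.comp, Equiv.swap_apply_apply]
  rw [hfun]

lemma dd_rename (σ : Equiv.Perm (Fin n)) {i j : Fin n} (hij : i ≠ j) (p : R n) :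
    rename (⇑σ) (dd i j p) = dd (σ i) (σ j) (rename (⇑σ) p) := by
  refine dd_unique (fun h => hij (σ.injective h)) ?_
  have h := dd_spec i j p
  have h2 := congrArg (rename (⇑σ)) h
  rw [map_sub, map_mul, map_sub, rename_X, rename_X, Kex_rename] at h2
  exact h2.symm

lemma pderiv_Kex {i j l : Fin n} (hli : l ≠ i) (hlj : l ≠ j) (p : R n) :
    pderiv l (Kex i j p) = Kex i j (pderiv l p) := by
  unfold Kex
  have := pderiv_rename (f := ⇑(Equiv.swap i j)) (Equiv.injective _) l p
  rwa [Equiv.swap_apply_of_ne_of_ne hli hlj] at this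

lemma pderiv_dd {i j l : Fin n} (hij : i ≠ j) (hli : l ≠ i) (hlj : l ≠ j) (p : R n) :
    pderiv l (dd i j p) = dd i j (pderiv l p) := by
  refine dd_unique hij ?_
  have h := dd_spec i j p
  have h2 := congrArg (⇑(pderiv l)) h
  rw [Derivation.leibniz, map_sub, pderiv_Kex hli hlj] at h2
  simp only [map_sub, pderiv_X, Pi.single_eq_of_ne (Ne.symm hli), Pi.single_eq_of_ne (Ne.symm hlj),
    smul_eq_mul, sub_zero, mul_zero, add_zero, zero_sub, mul_neg, sub_self] at h2
  rw [h2]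

end Aux
/-- `E_i = x_i ∂_i`. -/
def Eop (i : Fin n) (p : R n) : R n := X i * pderiv i p

/-- `π_{ij} = x_i dd_{ij}`. -/
def Pop (i j : Fin n) (p : R n) : R n := X i * dd i j p

lemma D_eq (i : Fin n) (p : R n) :
    D i p = C alpha * Eop i p + ∑ j ∈ Finset.univ.erase i, Pop i j p := rfl

lemma Pop_zero {i j : Fin n} (hij : i ≠ j) : Pop i j (0 : R n) = 0 := by
  unfold Pop; rw [dd_zero hij, mul_zero]

lemma Eop_add (i : Fin n) (p q : R n) : Eop i (p + q) = Eop i p + Eop i q := by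
  unfold Eop; rw [map_add]; ring

lemma Pop_add {i j : Fin n} (hij : i ≠ j) (p q : R n) :
    Pop i j (p + q) = Pop i j p + Pop i j q := by
  unfold Pop; rw [dd_add hij]; ring

lemma D_zero (i : Fin n) : D i (0 : R n) = 0 := by
  unfold D
  rw [map_zero]
  simp only [mul_zero, zero_add]
  refine Finset.sum_eq_zero fun j hj => ?_
  rw [dd_zero (Ne.symm (Finset.ne_of_mem_erase hj)), mul_zero]

lemma D_add (i : Fin n) (p q : R n) : D i (p + q) = D i p + D i q := by
  unfold D
  rw [map_add]
  have h : ∑ j ∈ Finset.univ.erase i, X i * dd i j (p + q)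
      = ∑ j ∈ Finset.univ.erase i, (X i * dd i j p + X i * dd i j q) :=
    Finset.sum_congr rfl fun j hj => by
      rw [dd_add (Ne.symm (Finset.ne_of_mem_erase hj))]; ring
  rw [h, Finset.sum_add_distrib]
  ring

lemma D_Cmul (i : Fin n) (c : FF) (p : R n) : D i (C c * p) = C c * D i p := by
  unfold D
  rw [Derivation.leibniz]
  simp only [pderiv_C, smul_eq_mul, mul_zero, add_zero]
  have h : ∑ j ∈ Finset.univ.erase i, X i * dd i j (C c * p)
      = ∑ j ∈ Finset.univ.erase i, C c * (X i * dd i j p) :=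
    Finset.sum_congr rfl fun j hj => by
      rw [dd_Cmul (Ne.symm (Finset.ne_of_mem_erase hj))]; ring
  rw [h, ← Finset.mul_sum]
  ring

lemma D_sum (i : Fin n) {β : Type*} (s : Finset β) (f : β → R n) :
    D i (∑ t ∈ s, f t) = ∑ t ∈ s, D i (f t) := by
  induction s using Finset.cons_induction with
  | empty => simpa using D_zero i
  | cons a s ha ih => rw [Finset.sum_cons, D_add, ih, Finset.sum_cons]

lemma pderiv_pderiv (i j : Fin n) (p : R n) :
    pderiv i (pderiv j p) = pderiv j (pderiv i p) := by
  rcases eq_or_ne i j with rfl | hij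
  · rfl
  induction p using MvPolynomial.induction_on' with
  | monomial s a =>
      rw [pderiv_monomial, pderiv_monomial, pderiv_monomial, pderiv_monomial]
      have h1 : (s - Finsupp.single j 1 : Fin n →₀ ℕ) i = s i := by
        simp [Finsupp.sub_apply, Finsupp.single_apply, hij.symm]
      have h2 : (s - Finsupp.single i 1 : Fin n →₀ ℕ) j = s j := by
        simp [Finsupp.sub_apply, Finsupp.single_apply, hij]
      rw [h1, h2]
      have h3 : s - Finsupp.single j 1 - Finsupp.single i 1
          = s - Finsupp.single i 1 - Finsupp.single j 1 := by
        ext k; simp only [Finsupp.tsub_apply, Finsupp.single_apply]; omega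
      rw [h3]
      ring_nf
  | add p q hp hq => simp [map_add, hp, hq]

lemma Eop_Eop {i j : Fin n} (hij : i ≠ j) (p : R n) : Eop i (Eop j p) = Eop j (Eop i p) := by
  unfold Eop
  rw [Derivation.leibniz, Derivation.leibniz]
  simp only [pderiv_X, Pi.single_eq_of_ne hij, Pi.single_eq_of_ne (Ne.symm hij),
    smul_eq_mul, mul_zero, add_zero]
  rw [pderiv_pderiv]
  ring

lemma Kex_X_ne {i j k : Fin n} (hki : k ≠ i) (hkj : k ≠ j) : Kex i j (X k : R n) = X k := by
  unfold Kex
  rw [rename_X, Equiv.swap_apply_of_ne_of_ne hki hkj]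

lemma Pop_Eop {i k j : Fin n} (hik : i ≠ k) (hji : j ≠ i) (hjk : j ≠ k) (p : R n) :
    Pop i k (Eop j p) = Eop j (Pop i k p) := by
  unfold Pop Eop
  rw [dd_mul_inv hik (Kex_X_ne hji hjk), Derivation.leibniz]
  simp only [pderiv_X, Pi.single_eq_of_ne (Ne.symm hji), smul_eq_mul, mul_zero, add_zero]
  rw [pderiv_dd hik hji hjk]
  ring
lemma Kex_dd {a b i j : Fin n} (hij : i ≠ j) (p : R n) :
    Kex a b (dd i j p) = dd (Equiv.swap a b i) (Equiv.swap a b j) (Kex a b p) :=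
  dd_rename (Equiv.swap a b) hij p

lemma dd_Kex_same {i j : Fin n} (hij : i ≠ j) (p : R n) :
    dd i j (Kex i j p) = -dd i j p := by
  refine (dd_unique hij ?_).symm
  rw [Kex_Kex]
  have h := dd_spec i j p
  calc (X i - X j) * -dd i j p = -((X i - X j) * dd i j p) := by ring
  _ = -(p - Kex i j p) := by rw [← h]
  _ = Kex i j p - p := by ring

lemma Pop_flip {i j : Fin n} (hij : i ≠ j) (u : R n) :
    Pop i j (Kex i j u) + u = Pop j i u + Kex i j u := by
  unfold Pop
  rw [dd_Kex_same hij, dd_flip hij]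
  have h := dd_spec i j u
  calc X i * -dd i j u + u = u - (X i - X j) * dd i j u + X j * -dd i j u := by ring
  _ = u - (u - Kex i j u) + X j * -dd i j u := by rw [← h]
  _ = X j * -dd i j u + Kex i j u := by ring

lemma Kex_Eop (i j k : Fin n) (p : R n) :
    Kex i j (Eop k p) = Eop (Equiv.swap i j k) (Kex i j p) := by
  unfold Eop Kex
  rw [map_mul, rename_X]
  congr 1
  exact (pderiv_rename (Equiv.injective _) k p).symm

lemma Kex_Pop {a b i j : Fin n} (hij : i ≠ j) (p : R n) :
    Kex a b (Pop i j p) = Pop (Equiv.swap a b i) (Equiv.swap a b j) (Kex a b p) := by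
  unfold Pop
  have : Kex a b (X i * dd i j p) = Kex a b (X i) * Kex a b (dd i j p) := by
    unfold Kex; rw [map_mul]
  rw [this, Kex_dd hij]
  congr 1
  unfold Kex; rw [rename_X]

lemma Kex_Kex_disjoint {i k j l : Fin n} (hij : i ≠ j) (hil : i ≠ l) (hkj : k ≠ j)
    (hkl : k ≠ l) (p : R n) : Kex i k (Kex j l p) = Kex j l (Kex i k p) := by
  unfold Kex
  rw [rename_rename, rename_rename]
  have hfun : ⇑(Equiv.swap i k) ∘ ⇑(Equiv.swap j l) = ⇑(Equiv.swap j l) ∘ ⇑(Equiv.swap i k) := by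
    funext x
    simp only [Function.comp_apply, Equiv.swap_apply_def]
    split_ifs <;> simp_all
  rw [hfun]

lemma dd_dd_disjoint {i k j l : Fin n} (hik : i ≠ k) (hjl : j ≠ l) (hij : i ≠ j)
    (hil : i ≠ l) (hkj : k ≠ j) (hkl : k ≠ l) (p : R n) :
    dd i k (dd j l p) = dd j l (dd i k p) := by
  have hM : ((X i - X k) * (X j - X l) : R n) ≠ 0 :=
    mul_ne_zero (X_sub_X_ne hik) (X_sub_X_ne hjl)
  apply mul_left_cancel₀ hM
  have e1 : (X i - X k) * dd i k (dd j l p) = dd j l p - dd j l (Kex i k p) := by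
    rw [← dd_spec, Kex_dd hjl, Equiv.swap_apply_of_ne_of_ne (Ne.symm hij) (Ne.symm hkj),
      Equiv.swap_apply_of_ne_of_ne (Ne.symm hil) (Ne.symm hkl)]
  have e2 : (X j - X l) * dd j l (dd i k p) = dd i k p - dd i k (Kex j l p) := by
    rw [← dd_spec, Kex_dd hik, Equiv.swap_apply_of_ne_of_ne hij hil,
      Equiv.swap_apply_of_ne_of_ne hkj hkl]
  have e3 : (X j - X l) * dd j l p = p - Kex j l p := (dd_spec j l p).symm
  have e4 : (X i - X k) * dd i k p = p - Kex i k p := (dd_spec i k p).symm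
  have e5 : (X j - X l) * dd j l (Kex i k p) = Kex i k p - Kex j l (Kex i k p) :=
    (dd_spec j l _).symm
  have e6 : (X i - X k) * dd i k (Kex j l p) = Kex j l p - Kex i k (Kex j l p) :=
    (dd_spec i k _).symm
  have F3 : Kex i k (Kex j l p) = Kex j l (Kex i k p) := Kex_Kex_disjoint hij hil hkj hkl p
  linear_combination (X j - X l) * e1 - (X i - X k) * e2 + e3 - e4 - e5 + e6 - F3

lemma Pop_Pop_disjoint {i k j l : Fin n} (hik : i ≠ k) (hjl : j ≠ l) (hij : i ≠ j)
    (hil : i ≠ l) (hkj : k ≠ j) (hkl : k ≠ l) (p : R n) :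
    Pop i k (Pop j l p) = Pop j l (Pop i k p) := by
  unfold Pop
  rw [dd_mul_inv hik (Kex_X_ne (Ne.symm hij) (Ne.symm hkj)),
    dd_mul_inv hjl (Kex_X_ne hij hil), dd_dd_disjoint hik hjl hij hil hkj hkl]
  ring

lemma dd_dd_core {i j k : Fin n} (hij : i ≠ j) (hik : i ≠ k) (hjk : j ≠ k)
    {p : R n} (hp : Kex i j p = p) :
    dd i k (dd j k p) = dd j k (dd i k p) := by
  have hM : ((X j - X k) * ((X i - X k) * (X j - X i)) : R n) ≠ 0 :=
    mul_ne_zero (X_sub_X_ne hjk) (mul_ne_zero (X_sub_X_ne hik) (X_sub_X_ne (Ne.symm hij)))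
  apply mul_left_cancel₀ hM
  have e1 : (X i - X k) * dd i k (dd j k p) = dd j k p - dd j i (Kex i k p) := by
    rw [← dd_spec, Kex_dd hjk, Equiv.swap_apply_of_ne_of_ne (Ne.symm hij) hjk,
      Equiv.swap_apply_right]
  have e2 : (X j - X k) * dd j k (dd i k p) = dd i k p - dd i j (Kex j k p) := by
    rw [← dd_spec, Kex_dd hik, Equiv.swap_apply_of_ne_of_ne hij hik,
      Equiv.swap_apply_right]
  have e3 : (X j - X k) * dd j k p = p - Kex j k p := (dd_spec j k p).symm
  have e4 : (X i - X k) * dd i k p = p - Kex i k p := (dd_spec i k p).symm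
  have F1 : Kex j i (Kex i k p) = Kex j k p := by
    unfold Kex
    rw [rename_rename]
    have hfun : ⇑(Equiv.swap j i) ∘ ⇑(Equiv.swap i k) = ⇑(Equiv.swap j k) ∘ ⇑(Equiv.swap i j) := by
      funext x
      simp only [Function.comp_apply, Equiv.swap_apply_def]
      split_ifs <;> simp_all
    rw [hfun, ← rename_rename]
    have : rename (⇑(Equiv.swap i j)) p = p := hp
    rw [this]
  have F2 : Kex i j (Kex j k p) = Kex i k p := by
    unfold Kex
    rw [rename_rename]
    have hfun : ⇑(Equiv.swap i j) ∘ ⇑(Equiv.swap j k) = ⇑(Equiv.swap i k) ∘ ⇑(Equiv.swap i j) := by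
      funext x
      simp only [Function.comp_apply, Equiv.swap_apply_def]
      split_ifs <;> simp_all
    rw [hfun, ← rename_rename]
    have : rename (⇑(Equiv.swap i j)) p = p := hp
    rw [this]
  have e5 : (X j - X i) * dd j i (Kex i k p) = Kex i k p - Kex j k p := by
    rw [← dd_spec, F1]
  have e6 : (X i - X j) * dd i j (Kex j k p) = Kex j k p - Kex i k p := by
    rw [← dd_spec, F2]
  linear_combination ((X j - X k) * (X j - X i)) * e1 - ((X i - X k) * (X j - X i)) * e2
    + (X j - X i) * e3 - (X j - X i) * e4 - (X j - X k) * e5 - (X i - X k) * e6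

lemma PerK {i j k : Fin n} (hij : i ≠ j) (hik : i ≠ k) (hjk : j ≠ k)
    {p : R n} (hp : Kex i j p = p) :
    Pop i j (Pop j k p) + Pop i k (Pop j k p) + Pop i k p
      = Pop j i (Pop i k p) + Pop j k (Pop i k p) + Pop j k p := by
  have hv : Kex i j (Pop i k p) = Pop j k p := by
    have g1 : Equiv.swap i j i = j := Equiv.swap_apply_left i j
    have g2 : Equiv.swap i j k = k := Equiv.swap_apply_of_ne_of_ne (Ne.symm hik) (Ne.symm hjk)
    rw [Kex_Pop hik, hp, g1, g2]
  have h1 := Pop_flip hij (Pop i k p)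
  rw [hv] at h1
  have h2 : Pop i k (Pop j k p) = Pop j k (Pop i k p) := by
    unfold Pop
    rw [dd_mul_inv hik (Kex_X_ne (Ne.symm hij) hjk),
      dd_mul_inv hjk (Kex_X_ne hij hik), dd_dd_core hij hik hjk hp]
    ring
  linear_combination h1 + h2
lemma Eop_zero (i : Fin n) : Eop i (0 : R n) = 0 := by
  unfold Eop; simp

lemma Pop_symm_zero {i j : Fin n} (hij : i ≠ j) {p : R n} (hp : Kex i j p = p) :
    Pop i j p = 0 := by
  unfold Pop; rw [dd_invariant hij hp, mul_zero]

lemma M2core {i j : Fin n} (hij : i ≠ j) {p : R n} (hp : Kex i j p = p) :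
    Eop i p + (∑ k ∈ Finset.univ.erase i, Pop i k (Eop j p))
      + ∑ l ∈ Finset.univ.erase j, Eop i (Pop j l p)
    = Eop j p + (∑ k ∈ Finset.univ.erase j, Pop j k (Eop i p))
      + ∑ l ∈ Finset.univ.erase i, Eop j (Pop i l p) := by
  have hpji : Kex j i p = p := by rw [Kex_comm]; exact hp
  have hPij : Pop i j p = 0 := Pop_symm_zero hij hp
  have hPji : Pop j i p = 0 := Pop_symm_zero (Ne.symm hij) hpji
  have hjmem : j ∈ Finset.univ.erase i := Finset.mem_erase.mpr ⟨Ne.symm hij, Finset.mem_univ j⟩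
  have himem : i ∈ Finset.univ.erase j := Finset.mem_erase.mpr ⟨hij, Finset.mem_univ i⟩
  have hT : (Finset.univ.erase j).erase i = (Finset.univ.erase i).erase j := by
    ext x; simp [Finset.mem_erase]; tauto
  rw [← Finset.add_sum_erase _ _ hjmem, ← Finset.add_sum_erase _ _ himem,
    ← Finset.add_sum_erase _ (fun k => Pop j k (Eop i p)) himem,
    ← Finset.add_sum_erase _ (fun l => Eop j (Pop i l p)) hjmem, hT, hPji, hPij, Eop_zero, Eop_zero]
  have s1 : ∑ k ∈ (Finset.univ.erase i).erase j, Pop i k (Eop j p)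
      = ∑ k ∈ (Finset.univ.erase i).erase j, Eop j (Pop i k p) := by
    refine Finset.sum_congr rfl fun k hk => ?_
    rw [Finset.mem_erase, Finset.mem_erase] at hk
    exact Pop_Eop (Ne.symm hk.2.1) (Ne.symm hij) (Ne.symm hk.1) p
  have s2 : ∑ l ∈ (Finset.univ.erase i).erase j, Eop i (Pop j l p)
      = ∑ l ∈ (Finset.univ.erase i).erase j, Pop j l (Eop i p) := by
    refine Finset.sum_congr rfl fun l hl => ?_
    rw [Finset.mem_erase, Finset.mem_erase] at hl
    exact (Pop_Eop (Ne.symm hl.1) hij (Ne.symm hl.2.1) p).symm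
  rw [s1, s2]
  have key : Pop i j (Eop j p) + Eop i p = Pop j i (Eop i p) + Eop j p := by
    have hu : Kex i j (Eop i p) = Eop j p := by
      rw [Kex_Eop, Equiv.swap_apply_left, hp]
    have h := Pop_flip hij (Eop i p)
    rw [hu] at h
    exact h
  linear_combination key

lemma M3core {i j : Fin n} (hij : i ≠ j) {p : R n} (hp : Kex i j p = p) :
    (∑ l ∈ Finset.univ.erase j, ∑ k ∈ Finset.univ.erase i, Pop i k (Pop j l p))
      + ∑ k ∈ Finset.univ.erase i, Pop i k p
    = (∑ l ∈ Finset.univ.erase i, ∑ k ∈ Finset.univ.erase j, Pop j k (Pop i l p))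
      + ∑ k ∈ Finset.univ.erase j, Pop j k p := by
  have hpji : Kex j i p = p := by rw [Kex_comm]; exact hp
  have hPij : Pop i j p = 0 := Pop_symm_zero hij hp
  have hPji : Pop j i p = 0 := Pop_symm_zero (Ne.symm hij) hpji
  have hjmem : j ∈ Finset.univ.erase i := Finset.mem_erase.mpr ⟨Ne.symm hij, Finset.mem_univ j⟩
  have himem : i ∈ Finset.univ.erase j := Finset.mem_erase.mpr ⟨hij, Finset.mem_univ i⟩
  have hT : (Finset.univ.erase j).erase i = (Finset.univ.erase i).erase j := by
    ext x; simp [Finset.mem_erase]; tauto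
  set T := (Finset.univ.erase i).erase j with hTdef
  have hmemT : ∀ x ∈ T, x ≠ j ∧ x ≠ i := by
    intro x hx; rw [hTdef, Finset.mem_erase, Finset.mem_erase] at hx; exact ⟨hx.1, hx.2.1⟩
  -- split single sums
  have g1 : ∑ k ∈ Finset.univ.erase i, Pop i k p = ∑ k ∈ T, Pop i k p := by
    rw [← Finset.add_sum_erase _ _ hjmem, hPij, zero_add]
  have g2 : ∑ k ∈ Finset.univ.erase j, Pop j k p = ∑ k ∈ T, Pop j k p := by
    rw [← Finset.add_sum_erase _ _ himem, hPji, zero_add, hT]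
  -- split outer double sums
  have g3 : ∑ l ∈ Finset.univ.erase j, ∑ k ∈ Finset.univ.erase i, Pop i k (Pop j l p)
      = ∑ l ∈ T, ∑ k ∈ Finset.univ.erase i, Pop i k (Pop j l p) := by
    rw [← Finset.add_sum_erase _ _ himem, hT, hPji]
    have : ∑ k ∈ Finset.univ.erase i, Pop i k (0 : R n) = 0 :=
      Finset.sum_eq_zero fun k hk => Pop_zero (Ne.symm (Finset.ne_of_mem_erase hk))
    rw [this, zero_add]
  have g4 : ∑ l ∈ Finset.univ.erase i, ∑ k ∈ Finset.univ.erase j, Pop j k (Pop i l p)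
      = ∑ l ∈ T, ∑ k ∈ Finset.univ.erase j, Pop j k (Pop i l p) := by
    rw [← Finset.add_sum_erase _ _ hjmem, hPij]
    have : ∑ k ∈ Finset.univ.erase j, Pop j k (0 : R n) = 0 :=
      Finset.sum_eq_zero fun k hk => Pop_zero (Ne.symm (Finset.ne_of_mem_erase hk))
    rw [this, zero_add]
  rw [g1, g2, g3, g4]
  -- split inner sums at the special index and the diagonal
  have g5 : ∀ l ∈ T, ∑ k ∈ Finset.univ.erase i, Pop i k (Pop j l p)
      = Pop i j (Pop j l p) + Pop i l (Pop j l p)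
        + ∑ k ∈ T.erase l, Pop i k (Pop j l p) := by
    intro l hl
    have hlT : l ∈ T := hl
    rw [← Finset.add_sum_erase _ _ hjmem, ← Finset.add_sum_erase _ _ hlT]
    ring
  have g6 : ∀ l ∈ T, ∑ k ∈ Finset.univ.erase j, Pop j k (Pop i l p)
      = Pop j i (Pop i l p) + Pop j l (Pop i l p)
        + ∑ k ∈ T.erase l, Pop j k (Pop i l p) := by
    intro l hl
    have hlT : l ∈ T := hl
    rw [← Finset.add_sum_erase _ _ himem, hT, ← Finset.add_sum_erase _ _ hlT]
    ring
  rw [Finset.sum_congr rfl g5, Finset.sum_congr rfl g6]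
  rw [Finset.sum_add_distrib, Finset.sum_add_distrib, Finset.sum_add_distrib,
    Finset.sum_add_distrib]
  -- off-diagonal sums agree
  have offd : ∑ l ∈ T, ∑ k ∈ T.erase l, Pop i k (Pop j l p)
      = ∑ l ∈ T, ∑ k ∈ T.erase l, Pop j k (Pop i l p) := by
    have step1 : ∑ l ∈ T, ∑ k ∈ T.erase l, Pop i k (Pop j l p)
        = ∑ l ∈ T, ∑ k ∈ T.erase l, Pop j l (Pop i k p) := by
      refine Finset.sum_congr rfl fun l hl => Finset.sum_congr rfl fun k hk => ?_
      obtain ⟨hlj, hli⟩ := hmemT l hl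
      have hkT := Finset.mem_of_mem_erase hk
      obtain ⟨hkj, hki⟩ := hmemT k hkT
      have hkl : k ≠ l := Finset.ne_of_mem_erase hk
      exact Pop_Pop_disjoint (Ne.symm hki) (Ne.symm hlj) hij (Ne.symm hli) hkj hkl p
    rw [step1]
    exact Finset.sum_comm' (fun x y => by
      simp only [Finset.mem_erase]
      tauto)
  rw [offd]
  -- per-index identity summed over T
  have perk : ∑ l ∈ T, Pop i j (Pop j l p) + ∑ l ∈ T, Pop i l (Pop j l p) + ∑ k ∈ T, Pop i k p
      = ∑ l ∈ T, Pop j i (Pop i l p) + ∑ l ∈ T, Pop j l (Pop i l p) + ∑ k ∈ T, Pop j k p := by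
    rw [← Finset.sum_add_distrib, ← Finset.sum_add_distrib, ← Finset.sum_add_distrib,
      ← Finset.sum_add_distrib]
    refine Finset.sum_congr rfl fun l hl => ?_
    obtain ⟨hlj, hli⟩ := hmemT l hl
    exact PerK hij (Ne.symm hli) (Ne.symm hlj) hp
  linear_combination perk

theorem D_D_core {i j : Fin n} (hij : i ≠ j) {p : R n} (hp : Kex i j p = p) :
    D i (D j p) + D i p = D j (D i p) + D j p := by
  have expand : ∀ (a b : Fin n), D a (D b p)
      = C alpha * (C alpha * Eop a (Eop b p))
        + C alpha * ∑ k ∈ Finset.univ.erase a, Pop a k (Eop b p)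
        + C alpha * ∑ l ∈ Finset.univ.erase b, Eop a (Pop b l p)
        + ∑ l ∈ Finset.univ.erase b, ∑ k ∈ Finset.univ.erase a, Pop a k (Pop b l p) := by
    intro a b
    rw [D_eq b p, D_add, D_Cmul, D_sum, D_eq a (Eop b p)]
    have h2 : ∑ l ∈ Finset.univ.erase b, D a (Pop b l p)
        = ∑ l ∈ Finset.univ.erase b, (C alpha * Eop a (Pop b l p)
            + ∑ k ∈ Finset.univ.erase a, Pop a k (Pop b l p)) :=
      Finset.sum_congr rfl fun l _ => D_eq a _
    rw [h2, Finset.sum_add_distrib, ← Finset.mul_sum]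
    ring
  rw [expand i j, expand j i, D_eq i p, D_eq j p]
  have M1 : Eop i (Eop j p) = Eop j (Eop i p) := Eop_Eop hij p
  have M2 := M2core hij hp
  have M3 := M3core hij hp
  linear_combination (C alpha * C alpha) * M1 + C alpha * M2 + M3
lemma int_smul_eq (m : ℤ) (q : R n) : m • q = C (m : FF) * q := by
  rw [zsmul_eq_mul]
  congr 1

lemma D_int_smul (i : Fin n) (m : ℤ) (q : R n) : D i (m • q) = m • D i q := by
  rw [int_smul_eq, int_smul_eq, D_Cmul]

lemma Dm_swap {i j : Fin n} (hij : i ≠ j) {p : R n} (hp : Kex i j p = p) (m : ℤ) :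
    Dm i m (Dm j (m + 1) p) = Dm j m (Dm i (m + 1) p) := by
  unfold Dm
  rw [D_add, D_add, D_int_smul, D_int_smul]
  simp only [int_smul_eq]
  push_cast
  simp only [map_add, map_one]
  linear_combination D_D_core hij hp

lemma D_rename (σ : Equiv.Perm (Fin n)) (i : Fin n) (p : R n) :
    rename (⇑σ) (D i p) = D (σ i) (rename (⇑σ) p) := by
  unfold D
  rw [map_add, map_mul, rename_C, map_mul, rename_X, map_sum]
  congr 1
  · rw [pderiv_rename σ.injective]
  · have step : ∀ j ∈ Finset.univ.erase i,
        rename (⇑σ) (X i * dd i j p) = X (σ i) * dd (σ i) (σ j) (rename (⇑σ) p) := by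
      intro j hj
      rw [map_mul, rename_X, dd_rename σ (Ne.symm (Finset.ne_of_mem_erase hj))]
    rw [Finset.sum_congr rfl step]
    refine Finset.sum_equiv σ (fun a => ?_) (fun a _ => rfl)
    simp [Finset.mem_erase, EmbeddingLike.apply_eq_iff_eq]

lemma Dm_rename (σ : Equiv.Perm (Fin n)) (k : Fin n) (m : ℤ) (p : R n) :
    rename (⇑σ) (Dm k m p) = Dm (σ k) m (rename (⇑σ) p) := by
  unfold Dm
  rw [int_smul_eq, int_smul_eq, map_add, map_mul, rename_C, D_rename]

lemma DJl_rename (σ : Equiv.Perm (Fin n)) (L : List (Fin n)) (m : ℤ) (p : R n) :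
    rename (⇑σ) (DJl L m p) = DJl (L.map ⇑σ) m (rename (⇑σ) p) := by
  induction L generalizing m with
  | nil => rfl
  | cons a t ih => 
      show rename (⇑σ) (Dm a m (DJl t (m+1) p)) = Dm (σ a) m (DJl (t.map ⇑σ) (m+1) (rename (⇑σ) p))
      rw [Dm_rename, ih]

lemma Kex_Dm {i j k : Fin n} (hki : k ≠ i) (hkj : k ≠ j) (m : ℤ) (q : R n) :
    Kex i j (Dm k m q) = Dm k m (Kex i j q) := by
  have h := Dm_rename (Equiv.swap i j) k m q
  rwa [Equiv.swap_apply_of_ne_of_ne hki hkj] at h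

lemma Kex_DJl_notmem {i j : Fin n} (L : List (Fin n)) (hiL : i ∉ L) (hjL : j ∉ L)
    {p : R n} (hp : Kex i j p = p) (m : ℤ) : Kex i j (DJl L m p) = DJl L m p := by
  induction L generalizing m with
  | nil => exact hp
  | cons a t ih =>
      have hai : a ≠ i := fun h => hiL (h ▸ (List.mem_cons_self : a ∈ a :: t))
      have haj : a ≠ j := fun h => hjL (h ▸ (List.mem_cons_self : a ∈ a :: t))
      show Kex i j (Dm a m (DJl t (m+1) p)) = Dm a m (DJl t (m+1) p)
      rw [Kex_Dm hai haj, ih (fun h => hiL (List.mem_cons_of_mem a h))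
        (fun h => hjL (List.mem_cons_of_mem a h))]

lemma DJl_perm {L1 L2 : List (Fin n)} (h : L1.Perm L2) (hnd : L1.Nodup)
    {p : R n} (hp : ∀ a b : Fin n, Kex a b p = p) (m : ℤ) : DJl L1 m p = DJl L2 m p := by
  induction h generalizing m with
  | nil => rfl
  | cons x h ih =>
      show Dm x m _ = Dm x m _
      rw [ih (List.Nodup.of_cons hnd) (m+1)]
  | swap x y l =>
      show Dm y m (Dm x (m+1) (DJl l (m+1+1) p)) = Dm x m (Dm y (m+1) (DJl l (m+1+1) p))
      have hyx : y ≠ x := by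
        have := hnd
        simp only [List.nodup_cons, List.mem_cons] at this
        exact fun h => this.1 (Or.inl h)
      have hyl : y ∉ l := by
        have := hnd
        simp only [List.nodup_cons, List.mem_cons] at this
        exact fun h => this.1 (Or.inr h)
      have hxl : x ∉ l := by
        have := hnd
        simp only [List.nodup_cons] at this
        exact this.2.1
      have hq : Kex y x (DJl l (m + 1 + 1) p) = DJl l (m + 1 + 1) p :=
        Kex_DJl_notmem l hyl hxl (hp y x) _
      exact Dm_swap hyx hq m
  | trans h1 h2 ih1 ih2 =>
      rw [ih1 hnd m, ih2 (h1.nodup_iff.mp hnd) m]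

lemma DJ_image (σ : Equiv.Perm (Fin n)) (J : Finset (Fin n)) {p : R n}
    (hp : ∀ a b : Fin n, Kex a b p = p) (hps : rename (⇑σ) p = p) :
    rename (⇑σ) (DJ J p) = DJ (J.image ⇑σ) p := by
  unfold DJ
  rw [DJl_rename, hps]
  apply DJl_perm _ (List.Nodup.map σ.injective (Finset.sort_nodup _ _)) hp
  apply List.perm_of_nodup_nodup_toFinset_eq
    (List.Nodup.map σ.injective (Finset.sort_nodup _ _)) (Finset.sort_nodup _ _)
  ext x
  simp [List.mem_toFinset, List.mem_map, Finset.mem_sort, Finset.mem_image]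

lemma Bop_symm {p : R n} (hp : p.IsSymmetric) (i : ℕ) : (Bop i p).IsSymmetric := by
  intro σ
  unfold Bop
  rw [map_sum]
  have hp' : ∀ a b : Fin n, Kex a b p = p := fun a b => hp (Equiv.swap a b)
  have step : ∀ J ∈ Finset.univ.powersetCard i,
      rename (⇑σ) ((∏ k ∈ J, X k) * DJ J p)
        = (∏ k ∈ J.image ⇑σ, X k) * DJ (J.image ⇑σ) p := by
    intro J hJ
    rw [map_mul, DJ_image σ J hp' (hp σ), map_prod]
    congr 1
    rw [Finset.prod_image (fun a _ b _ h => σ.injective h)]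
    exact Finset.prod_congr rfl fun k _ => rename_X _ k
  rw [Finset.sum_congr rfl step]
  refine Finset.sum_nbij' (fun J => J.image ⇑σ) (fun J => J.image ⇑σ.symm) ?_ ?_ ?_ ?_ ?_
  · intro J hJ
    simp only [Finset.mem_powersetCard_univ] at hJ ⊢
    rw [Finset.card_image_of_injective _ σ.injective, hJ]
  · intro J hJ
    simp only [Finset.mem_powersetCard_univ] at hJ ⊢
    rw [Finset.card_image_of_injective _ σ.symm.injective, hJ]
  · intro J _
    simp [Finset.image_image]
  · intro J _
    simp [Finset.image_image]
  · intro J _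
    rfl
lemma degree_mem_homog {p : R n} {d : ℕ} (hp : p.IsHomogeneous d) {v : Fin n →₀ ℕ}
    (hv : v ∈ p.support) : v.degree = d := by
  rw [Finsupp.degree_eq_weight_one]
  exact hp (mem_support_iff.mp hv)

lemma Eop_homog {p : R n} {d : ℕ} (hp : p.IsHomogeneous d) (i : Fin n) :
    (X i * pderiv i p : R n).IsHomogeneous d := by
  have hrw : X i * pderiv i p
      = ∑ v ∈ p.support, X i * pderiv i (monomial v (coeff v p)) := by
    conv_lhs => rw [p.as_sum]
    rw [map_sum, Finset.mul_sum]
  rw [hrw]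
  apply IsHomogeneous.sum
  intro v hv
  rw [pderiv_monomial]
  rcases eq_or_ne (v i) 0 with h0 | h0
  · rw [h0]
    simp only [Nat.cast_zero, mul_zero, map_zero]
    exact isHomogeneous_zero _ _ _
  · have hd : Finsupp.single i 1 + (v - Finsupp.single i 1) = v := by
      ext k
      rcases eq_or_ne i k with rfl | hik
      · simp only [Finsupp.add_apply, Finsupp.tsub_apply, Finsupp.single_eq_same]
        omega
      · simp [Finsupp.add_apply, Finsupp.tsub_apply, Finsupp.single_eq_of_ne' hik]
    have hX : (X i : R n) = monomial (Finsupp.single i 1) 1 := rfl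
    rw [hX, monomial_mul, hd, one_mul]
    exact isHomogeneous_monomial _ (degree_mem_homog hp hv)

lemma Kex_homog {p : R n} {d : ℕ} (hp : p.IsHomogeneous d) (i j : Fin n) :
    (Kex i j p).IsHomogeneous d := hp.rename_isHomogeneous

lemma homog_of_mul_linear {i j : Fin n} (hij : i ≠ j) {q : R n} {d : ℕ}
    (h : ((X i - X j) * q).IsHomogeneous d) : (X i * q).IsHomogeneous d := by
  set a : R n := X i - X j with ha
  have ha1 : a.IsHomogeneous 1 := (isHomogeneous_X _ i).sub (isHomogeneous_X _ j)
  have hane : a ≠ 0 := X_sub_X_ne hij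
  have hcomp : ∀ e : ℕ, e + 1 ≠ d → homogeneousComponent e q = 0 := by
    intro e he
    have hmul : a * homogeneousComponent e q = homogeneousComponent (e+1) (a * q) := by
      rcases le_or_gt e q.totalDegree with hle | hlt
      · conv_rhs => rw [← q.sum_homogeneousComponent, Finset.mul_sum, map_sum]
        have step : ∀ t ∈ Finset.range (q.totalDegree + 1),
            homogeneousComponent (e+1) (a * homogeneousComponent t q)
              = if t = e then a * homogeneousComponent t q else 0 := by
          intro t _
          have hmem : a * homogeneousComponent t q ∈ homogeneousSubmodule (Fin n) FF (1 + t) :=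
            (mem_homogeneousSubmodule _ _).mpr
              (ha1.mul (homogeneousComponent_isHomogeneous t q))
          rw [homogeneousComponent_of_mem hmem]
          exact if_congr (by omega) rfl rfl
        rw [Finset.sum_congr rfl step, Finset.sum_ite_eq' _ e
          (fun t => a * homogeneousComponent t q), if_pos (Finset.mem_range.mpr (by omega))]
      · rw [homogeneousComponent_eq_zero _ _ hlt, mul_zero]
        rcases eq_or_ne (a * q) 0 with hz | hz
        · rw [hz, map_zero]
        · refine (homogeneousComponent_eq_zero _ _ ?_).symm
          have h1 : (a * q).totalDegree ≤ a.totalDegree + q.totalDegree := totalDegree_mul a q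
          have h2 : a.totalDegree ≤ 1 := ha1.totalDegree_le
          omega
    have hz : homogeneousComponent (e+1) (a * q) = 0 := by
      rw [homogeneousComponent_of_mem ((mem_homogeneousSubmodule _ _).mpr h), if_neg he]
    rw [hz] at hmul
    exact (mul_eq_zero.mp hmul).resolve_left hane
  have hrw : X i * q = ∑ e ∈ Finset.range (q.totalDegree + 1),
      X i * homogeneousComponent e q := by
    rw [← Finset.mul_sum, q.sum_homogeneousComponent]
  rw [hrw]
  apply IsHomogeneous.sum
  intro e _
  rcases eq_or_ne (e+1) d with hed | hed
  · have h1 := (isHomogeneous_X FF i).mul (homogeneousComponent_isHomogeneous e q)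
    rwa [show 1 + e = d by omega] at h1
  · rw [hcomp e hed, mul_zero]
    exact isHomogeneous_zero _ _ _

lemma Pop_homog {i j : Fin n} (hij : i ≠ j) {p : R n} {d : ℕ} (hp : p.IsHomogeneous d) :
    (Pop i j p).IsHomogeneous d := by
  unfold Pop
  refine homog_of_mul_linear hij ?_
  rw [← dd_spec]
  exact hp.sub (Kex_homog hp i j)

lemma D_homog (i : Fin n) {p : R n} {d : ℕ} (hp : p.IsHomogeneous d) :
    (D i p).IsHomogeneous d := by
  unfold D
  refine ((Eop_homog hp i).C_mul alpha).add (IsHomogeneous.sum _ _ _ fun j hj => ?_)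
  exact Pop_homog (Ne.symm (Finset.ne_of_mem_erase hj)) hp

lemma Dm_homog (i : Fin n) (m : ℤ) {p : R n} {d : ℕ} (hp : p.IsHomogeneous d) :
    (Dm i m p).IsHomogeneous d := by
  unfold Dm
  rw [int_smul_eq]
  exact (D_homog i hp).add (hp.C_mul _)

lemma DJl_homog (L : List (Fin n)) (m : ℤ) {p : R n} {d : ℕ} (hp : p.IsHomogeneous d) :
    (DJl L m p).IsHomogeneous d := by
  induction L generalizing m with
  | nil => exact hp
  | cons a t ih => exact Dm_homog a m (ih (m+1))

lemma Bop_homog (i : ℕ) {p : R n} {d : ℕ} (hp : p.IsHomogeneous d) :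
    (Bop i p).IsHomogeneous (d + i) := by
  unfold Bop
  refine IsHomogeneous.sum _ _ _ fun J hJ => ?_
  have h1 : (∏ k ∈ J, (X k : R n)).IsHomogeneous i := by
    have h2 := IsHomogeneous.prod J (fun k => (X k : R n)) (fun _ => 1)
      (fun k _ => isHomogeneous_X _ k)
    rwa [Finset.sum_const, smul_eq_mul, mul_one, Finset.mem_powersetCard_univ.mp hJ] at h2
  have hDJ : (DJ J p).IsHomogeneous d := DJl_homog _ 1 hp
  have h3 := h1.mul hDJ
  rwa [add_comm] at h3

lemma Bop_iter_homog (i m : ℕ) {p : R n} {d : ℕ} (hp : p.IsHomogeneous d) :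
    ((Bop i)^[m] p).IsHomogeneous (d + i * m) := by
  induction m with
  | zero => simpa using hp
  | succ m ih =>
      rw [Function.iterate_succ_apply']
      have h := Bop_homog i ih
      rwa [show d + i * m + i = d + i * (m+1) by ring] at h

lemma rodA_homog (lam : ℕ → ℕ) (i : ℕ) :
    (rodA (n := n) lam i).IsHomogeneous
      (∑ t ∈ Finset.range i, (t + 1) * (lam (t + 1) - lam (t + 2))) := by
  induction i with
  | zero => simpa [rodA] using isHomogeneous_one (Fin n) FF
  | succ i ih =>
      show ((Bop (i+1))^[lam (i+1) - lam (i+2)] (rodA lam i)).IsHomogeneous _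
      rw [Finset.sum_range_succ]
      exact Bop_iter_homog (i+1) (lam (i+1) - lam (i+2)) ih

lemma deg_sum (lam : ℕ → ℕ) (hdec : ∀ i, lam (i + 2) ≤ lam (i + 1)) (m : ℕ) :
    (∑ t ∈ Finset.range m, (t + 1) * (lam (t + 1) - lam (t + 2))) + m * lam (m + 1)
      = ∑ t ∈ Finset.range m, lam (t + 1) := by
  induction m with
  | zero => simp
  | succ m ih =>
      rw [Finset.sum_range_succ, Finset.sum_range_succ (fun t => lam (t + 1))]
      have e : (m + 1) * (lam (m + 1) - lam (m + 2)) + (m + 1) * lam (m + 1 + 1)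
          = (m + 1) * lam (m + 1) := by
        rw [← Nat.mul_add]
        congr 1
        have h2 : lam (m+1+1) = lam (m+2) := by norm_num
        have h3 := hdec m
        omega
      rw [add_assoc, e, Nat.succ_mul m (lam (m+1)), ← add_assoc, ih]

lemma one_symm : (1 : R n).IsSymmetric := fun _ => map_one _

lemma rodA_symm (lam : ℕ → ℕ) (i : ℕ) : (rodA (n := n) lam i).IsSymmetric := by
  induction i with
  | zero => exact one_symm
  | succ i ih =>
      show ((Bop (i+1))^[lam (i+1) - lam (i+2)] (rodA lam i)).IsSymmetric
      generalize lam (i+1) - lam (i+2) = m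
      induction m with
      | zero => exact ih
      | succ m ihm =>
          rw [Function.iterate_succ_apply']
          exact Bop_symm ihm (i+1)

end Jack

/-- `(B_n^+)^{λ_n} ⋯ (B_1^+)^{λ_1-λ_2} · 1` is symmetric and homogeneous of
degree `|λ|` (here `lam k` is the part `λ_k`, 1-indexed). -/
theorem rod_symmetric_homogeneous (n : ℕ) (lam : ℕ → ℕ)
    (hdec : ∀ i, lam (i + 2) ≤ lam (i + 1)) (hlen : ∀ i, n < i → lam i = 0) :
    (rod (n := n) lam).IsSymmetric ∧
    (rod (n := n) lam).IsHomogeneous (∑ i ∈ Finset.range n, lam (i + 1)) := by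
  constructor
  · exact rodA_symm lam n
  · have h := rodA_homog (n := n) lam n
    have hdeg := deg_sum lam hdec n
    rw [hlen (n+1) (by omega), Nat.mul_zero, add_zero] at hdeg
    rwa [hdeg] at h
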